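/- Construct recursively: ρ̃₀ = ρ; |i⟩ a unit vector in the support of ρ̃ᵢ₋₁; qᵢ the largest q ≥ 0 with ρ̃ᵢ₋₁ - q|i⟩⟨i| ≥ 0; ρ̃ᵢ = ρ̃ᵢ₋₁ - qᵢ|i⟩⟨i|. Then rank(ρ̃ᵢ) = rank(ρ̃ᵢ₋₁) - 1, the process terminates with Σᵢ₌₁ᴷ qᵢ|i⟩⟨i| = ρ where K = rank(ρ), and each qᵢ ≤ λ₁(ρ), the largest eigenvalue of ρ. -/

import Mathlib

open Matrix

section Stmt15Aux

open Submodule Module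
open scoped ComplexOrder

variable {d : ℕ}

private lemma stmt15_herm_range_eq {A : Matrix (Fin d) (Fin d) ℂ} (hA : A.IsHermitian) :
    LinearMap.range (Matrix.toEuclideanLin A) =
      (LinearMap.ker (Matrix.toEuclideanLin A))ᗮ := by
  set T := Matrix.toEuclideanLin A with hT
  have hsym : T.IsSymmetric := Matrix.isHermitian_iff_isSymmetric.mp hA
  have hle : LinearMap.range T ≤ (LinearMap.ker T)ᗮ := by
    rintro _ ⟨u, rfl⟩
    rw [Submodule.mem_orthogonal]
    intro z hz
    rw [← hsym z u, LinearMap.mem_ker.mp hz, inner_zero_left]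
  refine Submodule.eq_of_le_of_finrank_eq hle ?_
  have h1 := LinearMap.finrank_range_add_finrank_ker T
  have h2 := Submodule.finrank_add_finrank_orthogonal (LinearMap.ker T)
  omega

private lemma stmt15_herm_range_le {A B : Matrix (Fin d) (Fin d) ℂ}
    (hA : A.IsHermitian) (hB : B.IsHermitian)
    (hker : ∀ x, A *ᵥ x = 0 → B *ᵥ x = 0) :
    LinearMap.range B.mulVecLin ≤ LinearMap.range A.mulVecLin := by
  have key : LinearMap.range (Matrix.toEuclideanLin B) ≤
      LinearMap.range (Matrix.toEuclideanLin A) := by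
    rw [stmt15_herm_range_eq hB, stmt15_herm_range_eq hA]
    apply Submodule.orthogonal_le
    intro x hx
    exact LinearMap.mem_ker.mpr (congrArg (WithLp.toLp 2) (hker x (congrArg WithLp.ofLp (LinearMap.mem_ker.mp hx))))
  rintro v ⟨w, rfl⟩
  obtain ⟨u, hu⟩ := key ⟨WithLp.toLp 2 w, rfl⟩
  exact ⟨u.ofLp, congrArg WithLp.ofLp hu⟩

private lemma stmt15_dot_cs (a b : Fin d → ℂ) :
    ‖star a ⬝ᵥ b‖ ^ 2 ≤ (star a ⬝ᵥ a).re * (star b ⬝ᵥ b).re := by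
  let a' : EuclideanSpace ℂ (Fin d) := WithLp.toLp 2 a
  let b' : EuclideanSpace ℂ (Fin d) := WithLp.toLp 2 b
  have h1 : star a ⬝ᵥ b = inner (𝕜 := ℂ) a' b' := by rw [dotProduct_comm]; rfl
  have h2 : (star a ⬝ᵥ a).re = ‖a'‖ ^ 2 := by
    have : star a ⬝ᵥ a = inner (𝕜 := ℂ) a' a' := by rw [dotProduct_comm]; rfl
    rw [this, inner_self_eq_norm_sq_to_K]; norm_cast
  have h3 : (star b ⬝ᵥ b).re = ‖b'‖ ^ 2 := by
    have : star b ⬝ᵥ b = inner (𝕜 := ℂ) b' b' := by rw [dotProduct_comm]; rfl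
    rw [this, inner_self_eq_norm_sq_to_K]; norm_cast
  rw [h1, h2, h3]
  calc ‖inner (𝕜 := ℂ) a' b'‖ ^ 2 ≤ (‖a'‖ * ‖b'‖) ^ 2 := by
        apply pow_le_pow_left₀ (norm_nonneg _) (norm_inner_le_norm _ _)
    _ = ‖a'‖ ^ 2 * ‖b'‖ ^ 2 := by ring

private lemma stmt15_psd_cs {B : Matrix (Fin d) (Fin d) ℂ} (hB : B.PosSemidef)
    (w x : Fin d → ℂ) :
    ‖star w ⬝ᵥ B *ᵥ x‖ ^ 2 ≤ (star w ⬝ᵥ B *ᵥ w).re * (star x ⬝ᵥ B *ᵥ x).re := by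
  obtain ⟨C, rfl⟩ : ∃ C : Matrix (Fin d) (Fin d) ℂ, B = Cᴴ * C := by
    open scoped MatrixOrder in
    exact ⟨CFC.sqrt B, by
      rw [← star_eq_conjTranspose, (CFC.sqrt_nonneg B).isSelfAdjoint.star_eq,
        CFC.sqrt_mul_sqrt_self B hB.nonneg]⟩
  have key : ∀ y z : Fin d → ℂ, star y ⬝ᵥ (Cᴴ * C) *ᵥ z = star (C *ᵥ y) ⬝ᵥ (C *ᵥ z) := by
    intro y z
    rw [← mulVec_mulVec, star_mulVec, ← dotProduct_mulVec]
  rw [key, key, key]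
  exact stmt15_dot_cs _ _

private lemma stmt15_vmv_herm (v : Fin d → ℂ) : (vecMulVec v (star v)).IsHermitian := by
  ext i j
  simp [conjTranspose_apply, vecMulVec_apply, mul_comm]

private lemma stmt15_vmv_herm_smul (v : Fin d → ℂ) (c : ℝ) :
    ((c : ℂ) • vecMulVec v (star v)).IsHermitian := by
  ext i j
  simp [conjTranspose_apply, vecMulVec_apply, mul_comm]

private lemma stmt15_vmv_mulVec (v x : Fin d → ℂ) :
    vecMulVec v (star v) *ᵥ x = (star v ⬝ᵥ x) • v := by
  ext i
  simp [mulVec, vecMulVec_apply, dotProduct, Finset.mul_sum, mul_comm, mul_left_comm]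

private lemma stmt15_vmv_quad (v x : Fin d → ℂ) :
    star x ⬝ᵥ (vecMulVec v (star v) *ᵥ x) = (starRingEnd ℂ) (star v ⬝ᵥ x) * (star v ⬝ᵥ x) := by
  rw [stmt15_vmv_mulVec, dotProduct_smul]
  have : star x ⬝ᵥ v = (starRingEnd ℂ) (star v ⬝ᵥ x) := by
    simp [dotProduct, map_sum, mul_comm]
  rw [smul_eq_mul, mul_comm, this]

private lemma stmt15_quad_sub (A : Matrix (Fin d) (Fin d) ℂ) (v x : Fin d → ℂ) (c : ℝ) :
    star x ⬝ᵥ (A - (c : ℂ) • vecMulVec v (star v)) *ᵥ x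
      = star x ⬝ᵥ A *ᵥ x - (c : ℂ) * ((‖star v ⬝ᵥ x‖ : ℂ) ^ 2) := by
  rw [sub_mulVec, dotProduct_sub, smul_mulVec, dotProduct_smul, smul_eq_mul]
  congr 1
  rw [stmt15_vmv_quad]
  congr 1
  rw [Complex.conj_mul']

private lemma stmt15_vmv_psd (v : Fin d → ℂ) {c : ℝ} (hc : 0 ≤ c) :
    ((c : ℂ) • vecMulVec v (star v)).PosSemidef := by
  refine PosSemidef.of_dotProduct_mulVec_nonneg (stmt15_vmv_herm_smul v c) fun x => ?_
  rw [smul_mulVec, dotProduct_smul, smul_eq_mul, stmt15_vmv_quad, Complex.conj_mul']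
  rw [← Complex.ofReal_pow, ← Complex.ofReal_mul]
  exact Complex.zero_le_real.mpr (by positivity)

private lemma stmt15_psd_sub_delta {B : Matrix (Fin d) (Fin d) ℂ} (hB : B.PosSemidef)
    {v : Fin d → ℂ} (hv1 : star v ⬝ᵥ v = 1)
    (hvr : v ∈ LinearMap.range B.mulVecLin) :
    ∃ δ : ℝ, 0 < δ ∧ (B - (δ : ℂ) • vecMulVec v (star v)).PosSemidef := by
  obtain ⟨w, hw'⟩ := hvr
  have hw : B *ᵥ w = v := hw'
  have hwB := hB.dotProduct_mulVec_nonneg w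
  set t : ℝ := (star w ⬝ᵥ B *ᵥ w).re with ht
  have htim : (star w ⬝ᵥ B *ᵥ w).im = 0 := by
    have := (Complex.le_def.mp hwB).2; simpa using this.symm
  have ht0 : 0 ≤ t := by have := (Complex.le_def.mp hwB).1; simpa using this
  have htpos : 0 < t := by
    rcases ht0.lt_or_eq with h | h
    · exact h
    · exfalso
      have hz : star w ⬝ᵥ B *ᵥ w = 0 := Complex.ext (by simp [← ht, ← h]) (by simp [htim])
      have h0 := (hB.dotProduct_mulVec_zero_iff w).mp hz
      rw [h0] at hw
      rw [← hw] at hv1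
      simp at hv1
  refine ⟨1 / t, by positivity, PosSemidef.of_dotProduct_mulVec_nonneg (hB.1.sub (stmt15_vmv_herm_smul v _)) ?_⟩
  intro x
  rw [stmt15_quad_sub]
  have hkey : star v ⬝ᵥ x = star w ⬝ᵥ B *ᵥ x := by
    rw [← hw, star_mulVec, hB.1.eq, ← dotProduct_mulVec]
  rw [hkey]
  have hxB := hB.dotProduct_mulVec_nonneg x
  have hxim : (star x ⬝ᵥ B *ᵥ x).im = 0 := by
    have := (Complex.le_def.mp hxB).2; simpa using this.symm
  have hx0 : 0 ≤ (star x ⬝ᵥ B *ᵥ x).re := by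
    have := (Complex.le_def.mp hxB).1; simpa using this
  have hcs := stmt15_psd_cs hB w x
  rw [Complex.le_def]
  constructor
  · simp only [Complex.sub_re, Complex.mul_re, Complex.ofReal_re, Complex.ofReal_im,
      Complex.zero_re]
    have hre : ((‖star w ⬝ᵥ B *ᵥ x‖ : ℂ) ^ 2).re = ‖star w ⬝ᵥ B *ᵥ x‖ ^ 2 := by norm_cast
    have him : ((‖star w ⬝ᵥ B *ᵥ x‖ : ℂ) ^ 2).im = 0 := by norm_cast
    rw [hre, him]
    rw [div_mul_eq_mul_div, one_mul]
    have hb : ‖star w ⬝ᵥ B *ᵥ x‖ ^ 2 / t ≤ (star x ⬝ᵥ B *ᵥ x).re := by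
      rw [div_le_iff₀ htpos]
      calc ‖star w ⬝ᵥ B *ᵥ x‖ ^ 2 ≤ t * (star x ⬝ᵥ B *ᵥ x).re := hcs
        _ = (star x ⬝ᵥ B *ᵥ x).re * t := mul_comm _ _
    simp only [zero_mul, sub_zero, sub_nonneg]
    exact hb
  · simp only [Complex.sub_im, Complex.mul_im, Complex.ofReal_re, Complex.ofReal_im,
      Complex.zero_im]
    have him : ((‖star w ⬝ᵥ B *ᵥ x‖ : ℂ) ^ 2).im = 0 := by norm_cast
    have hre : ((‖star w ⬝ᵥ B *ᵥ x‖ : ℂ) ^ 2).re = ‖star w ⬝ᵥ B *ᵥ x‖ ^ 2 := by norm_cast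
    rw [him, hre, hxim]
    ring

private lemma stmt15_rank_drop {A : Matrix (Fin d) (Fin d) ℂ} (hA : A.PosSemidef)
    {v : Fin d → ℂ} {q : ℝ} (hv1 : star v ⬝ᵥ v = 1)
    (hvr : v ∈ LinearMap.range A.mulVecLin) (hq0 : 0 ≤ q)
    (hB : (A - (q : ℂ) • vecMulVec v (star v)).PosSemidef)
    (hmax : ∀ q' : ℝ, 0 ≤ q' → (A - (q' : ℂ) • vecMulVec v (star v)).PosSemidef → q' ≤ q) :
    (A - (q : ℂ) • vecMulVec v (star v)).rank + 1 = A.rank := by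
  set B := A - (q : ℂ) • vecMulVec v (star v) with hBdef
  have hker : ∀ x, A *ᵥ x = 0 → B *ᵥ x = 0 := by
    intro x hx
    have h1 : star x ⬝ᵥ B *ᵥ x = - ((q : ℂ) * ((‖star v ⬝ᵥ x‖ : ℂ) ^ 2)) := by
      rw [hBdef, stmt15_quad_sub, hx]; simp
    have h2 := hB.dotProduct_mulVec_nonneg x
    have h3 : star x ⬝ᵥ B *ᵥ x = 0 := by
      rw [h1] at h2 ⊢
      have hre := (Complex.le_def.mp h2).1
      have hcast : (-((q : ℂ) * ((‖star v ⬝ᵥ x‖ : ℂ) ^ 2))).re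
          = -(q * ‖star v ⬝ᵥ x‖ ^ 2) := by norm_cast
      rw [hcast] at hre
      simp only [Complex.zero_re] at hre
      have hq2 : q * ‖star v ⬝ᵥ x‖ ^ 2 = 0 := by nlinarith [sq_nonneg ‖star v ⬝ᵥ x‖]
      have hcz : ((q : ℂ) * ((‖star v ⬝ᵥ x‖ : ℂ) ^ 2)) = 0 := by
        have := congrArg (Complex.ofReal) hq2
        push_cast at this
        simpa using this
      rw [hcz, neg_zero]
    exact (hB.dotProduct_mulVec_zero_iff x).mp h3
  have hrange : LinearMap.range B.mulVecLin ≤ LinearMap.range A.mulVecLin :=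
    stmt15_herm_range_le hA.1 hB.1 hker
  have hvnot : v ∉ LinearMap.range B.mulVecLin := by
    intro hmem
    obtain ⟨δ, hδ, hpsd⟩ := stmt15_psd_sub_delta hB hv1 hmem
    have heq : A - ((q + δ : ℝ) : ℂ) • vecMulVec v (star v)
        = B - (δ : ℂ) • vecMulVec v (star v) := by
      rw [hBdef]
      push_cast
      rw [add_smul]
      abel
    have := hmax (q + δ) (by linarith) (heq ▸ hpsd)
    linarith
  have hlt : LinearMap.range B.mulVecLin < LinearMap.range A.mulVecLin :=
    lt_of_le_of_ne hrange (fun h => hvnot (h ▸ hvr))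
  have h1 : B.rank < A.rank := Submodule.finrank_lt_finrank_of_lt hlt
  have hvne : v ≠ 0 := by
    intro h; rw [h] at hv1; simp at hv1
  have h2 : A.rank ≤ B.rank + 1 := by
    have hsub : LinearMap.range A.mulVecLin ≤ LinearMap.range B.mulVecLin ⊔ (ℂ ∙ v) := by
      rintro _ ⟨x, rfl⟩
      have hAx : A.mulVecLin x = B *ᵥ x + ((q : ℂ) * (star v ⬝ᵥ x)) • v := by
        show A *ᵥ x = _
        rw [hBdef, sub_mulVec, smul_mulVec, stmt15_vmv_mulVec, smul_smul]
        abel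
      rw [hAx]
      exact Submodule.add_mem_sup ⟨x, rfl⟩
        (Submodule.smul_mem _ _ (Submodule.mem_span_singleton_self v))
    calc A.rank ≤ finrank ℂ ↥(LinearMap.range B.mulVecLin ⊔ (ℂ ∙ v)) :=
          Submodule.finrank_mono hsub
      _ ≤ finrank ℂ ↥(LinearMap.range B.mulVecLin) + finrank ℂ ↥(ℂ ∙ v) :=
          Submodule.finrank_add_le_finrank_add_finrank _ _
      _ = B.rank + 1 := by rw [finrank_span_singleton hvne]; rfl
  omega

private lemma stmt15_rayleigh_le {ρ : Matrix (Fin d) (Fin d) ℂ}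
    (hρ : ρ.IsHermitian) {v : Fin d → ℂ} (hv1 : star v ⬝ᵥ v = 1) :
    (star v ⬝ᵥ ρ *ᵥ v).re ≤ ⨆ j, hρ.eigenvalues j := by
  set c := ⨆ j, hρ.eigenvalues j with hc
  have hcle : ∀ j, hρ.eigenvalues j ≤ c :=
    fun j => le_ciSup (Set.finite_range _).bddAbove j
  set U : Matrix (Fin d) (Fin d) ℂ := (hρ.eigenvectorUnitary : Matrix (Fin d) (Fin d) ℂ) with hU
  have hUU : U * star U = 1 := mem_unitaryGroup_iff.mp hρ.eigenvectorUnitary.2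
  have hdiag : diagonal (fun j => ((c - hρ.eigenvalues j : ℝ) : ℂ))
      = (c : ℂ) • (1 : Matrix (Fin d) (Fin d) ℂ)
        - diagonal (RCLike.ofReal ∘ hρ.eigenvalues) := by
    ext i j
    by_cases h : i = j
    · subst h; simp [diagonal_apply_eq]
    · simp [diagonal_apply_ne _ h, h]
  have hpsd : ((c : ℂ) • (1 : Matrix (Fin d) (Fin d) ℂ) - ρ).PosSemidef := by
    have heq : (c : ℂ) • (1 : Matrix (Fin d) (Fin d) ℂ) - ρ
        = U * diagonal (fun j => ((c - hρ.eigenvalues j : ℝ) : ℂ)) * star U := by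
      rw [hdiag, Matrix.mul_sub, Matrix.sub_mul, mul_smul_comm, mul_one, smul_mul_assoc, hUU]
      congr 1
      exact hρ.spectral_theorem
    rw [heq, star_eq_conjTranspose]
    exact (posSemidef_diagonal_iff.mpr
      (fun j => Complex.zero_le_real.mpr (by linarith [hcle j]))).mul_mul_conjTranspose_same U
  have h2 := hpsd.dotProduct_mulVec_nonneg v
  rw [sub_mulVec, smul_mulVec, one_mulVec, dotProduct_sub, dotProduct_smul, hv1,
    smul_eq_mul, mul_one] at h2
  have := (Complex.le_def.mp h2).1
  simp only [Complex.sub_re, Complex.ofReal_re, Complex.zero_re] at this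
  linarith

end Stmt15Aux

open scoped ComplexOrder in
/-- The recursive peeling construction: `ρ̃₀ = ρ`; `|i⟩` a unit vector in the support of
`ρ̃ᵢ₋₁`; `qᵢ` the largest `q ≥ 0` with `ρ̃ᵢ₋₁ - q|i⟩⟨i| ≥ 0`; `ρ̃ᵢ = ρ̃ᵢ₋₁ - qᵢ|i⟩⟨i|`.
Then the rank drops by one at each step, the process terminates with
`Σᵢ₌₁ᴷ qᵢ|i⟩⟨i| = ρ` where `K = rank ρ`, and each `qᵢ ≤ λ₁(ρ)`, the largest
eigenvalue of `ρ`. -/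
theorem stmt_15 {d K : ℕ} (ρ : Matrix (Fin d) (Fin d) ℂ)
    (hρ : ρ.PosSemidef) (htr : ρ.trace = 1) (hK : ρ.rank = K)
    (ρt : ℕ → Matrix (Fin d) (Fin d) ℂ) (v : ℕ → (Fin d → ℂ)) (q : ℕ → ℝ)
    (h0 : ρt 0 = ρ)
    (hv : ∀ i < K, dotProduct (star (v (i + 1))) (v (i + 1)) = 1 ∧
      v (i + 1) ∈ LinearMap.range (ρt i).mulVecLin)
    (hq : ∀ i < K, 0 ≤ q (i + 1) ∧
      (ρt i - ((q (i + 1) : ℝ) : ℂ) • Matrix.vecMulVec (v (i + 1)) (star (v (i + 1)))).PosSemidef ∧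
      ∀ q' : ℝ, 0 ≤ q' →
        (ρt i - ((q' : ℝ) : ℂ) • Matrix.vecMulVec (v (i + 1)) (star (v (i + 1)))).PosSemidef →
        q' ≤ q (i + 1))
    (hrec : ∀ i < K, ρt (i + 1) =
      ρt i - ((q (i + 1) : ℝ) : ℂ) • Matrix.vecMulVec (v (i + 1)) (star (v (i + 1)))) :
    (∀ i < K, (ρt (i + 1)).rank = (ρt i).rank - 1) ∧
    ρt K = 0 ∧
    (∑ i ∈ Finset.range K,
      ((q (i + 1) : ℝ) : ℂ) • Matrix.vecMulVec (v (i + 1)) (star (v (i + 1)))) = ρ ∧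
    (∀ i < K, q (i + 1) ≤ ⨆ j, hρ.1.eigenvalues j) := by
  -- The inductive invariant
  have main : ∀ i, i ≤ K → (ρt i).PosSemidef ∧ (ρt i).rank + i = K ∧
      ρ - ρt i = (∑ j ∈ Finset.range i,
        ((q (j + 1) : ℝ) : ℂ) • Matrix.vecMulVec (v (j + 1)) (star (v (j + 1)))) ∧
      (ρ - ρt i).PosSemidef := by
    intro i
    induction i with
    | zero => intro _; rw [h0]; refine ⟨hρ, by simpa using hK, by simp, by simp [Matrix.PosSemidef.zero]⟩
    | succ n ih =>
      intro hn
      have hnK : n < K := by omega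
      obtain ⟨hpsd, hrank, hsum, hdpsd⟩ := ih (by omega)
      obtain ⟨hv1, hvr⟩ := hv n hnK
      obtain ⟨hq0, hqpsd, hqmax⟩ := hq n hnK
      have hdrop := stmt15_rank_drop hpsd hv1 hvr hq0 hqpsd hqmax
      refine ⟨?_, ?_, ?_, ?_⟩
      · rw [hrec n hnK]; exact hqpsd
      · rw [hrec n hnK]; omega
      · rw [hrec n hnK, Finset.sum_range_succ, ← hsum]
        abel
      · rw [hrec n hnK]
        have : ρ - (ρt n - ((q (n + 1) : ℝ) : ℂ) • vecMulVec (v (n + 1)) (star (v (n + 1))))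
            = (ρ - ρt n) + ((q (n + 1) : ℝ) : ℂ) • vecMulVec (v (n + 1)) (star (v (n + 1))) := by
          abel
        rw [this]
        exact hdpsd.add (stmt15_vmv_psd _ hq0)
  -- ρt K = 0
  have hK0 : ρt K = 0 := by
    obtain ⟨hpsd, hrank, _, _⟩ := main K le_rfl
    have hr0 : (ρt K).rank = 0 := by omega
    have hbot : LinearMap.range (ρt K).mulVecLin = ⊥ :=
      Submodule.finrank_eq_zero.mp hr0
    have hz : ∀ x, (ρt K) *ᵥ x = 0 := by
      intro x
      have : (ρt K).mulVecLin x ∈ (⊥ : Submodule ℂ (Fin d → ℂ)) := by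
        rw [← hbot]; exact ⟨x, rfl⟩
      simpa using this
    ext i j
    have h := congrFun (hz (Pi.single j 1)) i
    simpa [mulVec_single] using h
  refine ⟨?_, hK0, ?_, ?_⟩
  · intro i hi
    obtain ⟨_, hr1, _, _⟩ := main i (by omega)
    obtain ⟨_, hr2, _, _⟩ := main (i + 1) (by omega)
    omega
  · obtain ⟨_, _, hsum, _⟩ := main K le_rfl
    rw [hK0, sub_zero] at hsum
    exact hsum.symm
  · intro i hi
    obtain ⟨hpsd, _, _, hdpsd⟩ := main i (by omega)
    obtain ⟨hv1, hvr⟩ := hv i hi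
    obtain ⟨hq0, hqpsd, _⟩ := hq i hi
    -- q (i+1) ≤ re (v* ρt i v)
    have h1 : q (i + 1) ≤ (star (v (i + 1)) ⬝ᵥ (ρt i) *ᵥ (v (i + 1))).re := by
      have h2 := hqpsd.dotProduct_mulVec_nonneg (v (i + 1))
      rw [stmt15_quad_sub, hv1] at h2
      have := (Complex.le_def.mp h2).1
      simp only [Complex.sub_re, Complex.zero_re] at this
      have hre : (((q (i + 1) : ℝ) : ℂ) * ((‖(1 : ℂ)‖ : ℂ) ^ 2)).re = q (i + 1) := by
        norm_num
      rw [hre] at this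
      linarith
    -- re (v* ρt i v) ≤ re (v* ρ v)
    have h2 : (star (v (i + 1)) ⬝ᵥ (ρt i) *ᵥ (v (i + 1))).re
        ≤ (star (v (i + 1)) ⬝ᵥ ρ *ᵥ (v (i + 1))).re := by
      have h3 := hdpsd.dotProduct_mulVec_nonneg (v (i + 1))
      rw [sub_mulVec, dotProduct_sub] at h3
      have := (Complex.le_def.mp h3).1
      simp only [Complex.sub_re, Complex.zero_re] at this
      linarith
    have h3 := stmt15_rayleigh_le hρ.1 hv1
    linarith
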